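/- Suppose the synchronization word s ∈ ℂ^n has ideal autocorrelation, i.e. Re(s_τ^H s_μ) = 0 for all τ ≠ μ, and ‖s‖² = nρ_s. Then for Y ~ CN(0, (1+ρ)I_n) and f as above, P(f(μ) ≤ f(τ)) = Q(√(n ρ_s / (1+ρ))) for every τ ≠ μ, and consequently the union bound on the synchronization error probability satisfies P(∃ τ ≠ μ : f(μ) ≤ f(τ)) ≤ (n−1) Q(√(n ρ_s / (1+ρ))). -/

import Mathlib

open MeasureTheory Real

/-- The circular complex Gaussian `CN(0, 2v)`: real and imaginary parts independent `N(0, v)`. -/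
noncomputable def complexGaussian (v : NNReal) : Measure ℂ :=
  ((ProbabilityTheory.gaussianReal 0 v).prod (ProbabilityTheory.gaussianReal 0 v)).map
    (fun p => (p.1 : ℂ) + p.2 * Complex.I)

open ProbabilityTheory


lemma pdf_conv (v₁ v₂ : NNReal) (h₁ : v₁ ≠ 0) (h₂ : v₂ ≠ 0) (y : ℝ) :
    ∫ x, gaussianPDFReal 0 v₁ x * gaussianPDFReal 0 v₂ (y - x) =
      gaussianPDFReal 0 (v₁ + v₂) y := by
  have hV1 : 0 < (v₁ : ℝ) := lt_of_le_of_ne (v₁.coe_nonneg) (by exact_mod_cast (Ne.symm h₁))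
  have hV2 : 0 < (v₂ : ℝ) := lt_of_le_of_ne (v₂.coe_nonneg) (by exact_mod_cast (Ne.symm h₂))
  set a : ℝ := ((v₁:ℝ) + v₂) / (2 * v₁ * v₂) with ha_def
  have ha : 0 < a := by positivity
  set b : ℝ := (v₁:ℝ) * y / ((v₁:ℝ) + v₂) with hb_def
  set C : ℝ := (√(2 * π * v₁))⁻¹ * (√(2 * π * v₂))⁻¹ * rexp (-y^2 / (2 * ((v₁:ℝ) + v₂))) with hC_def
  have key : ∀ x : ℝ, gaussianPDFReal 0 v₁ x * gaussianPDFReal 0 v₂ (y - x)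
      = C * rexp (-a * (x - b)^2) := by
    intro x
    have hexp : -x ^ 2 / (2 * (v₁:ℝ)) + -(y - x) ^ 2 / (2 * (v₂:ℝ))
        = -y^2 / (2 * ((v₁:ℝ) + v₂)) + -a * (x - b)^2 := by
      rw [ha_def, hb_def]; field_simp; ring
    simp only [gaussianPDFReal, sub_zero, hC_def]
    rw [mul_mul_mul_comm, ← Real.exp_add, hexp, Real.exp_add]
    ring
  rw [integral_congr_ae (Filter.Eventually.of_forall key)]
  rw [MeasureTheory.integral_const_mul, integral_sub_right_eq_self (fun x => rexp (-a * x^2)) b,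
    integral_gaussian]
  have hs : √(π / a) * √(2 * π * ((v₁:ℝ) + v₂)) = √(2 * π * (v₁:ℝ)) * √(2 * π * (v₂:ℝ)) := by
    rw [← Real.sqrt_mul (by positivity), ← Real.sqrt_mul (by positivity)]
    congr 1
    rw [ha_def]; field_simp
  rw [gaussianPDFReal]
  push_cast
  rw [sub_zero, hC_def]
  set A := √(2 * π * (v₁:ℝ)) with hA
  set B := √(2 * π * (v₂:ℝ)) with hB
  set D := √(2 * π * ((v₁:ℝ) + v₂)) with hD
  have h1 : D ≠ 0 := by rw [hD]; positivity
  have h2 : A ≠ 0 := by rw [hA]; positivity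
  have h3 : B ≠ 0 := by rw [hB]; positivity
  have hsa : √(π / a) = A * B / D := by rw [eq_div_iff h1]; exact hs
  rw [hsa]
  field_simp
lemma gaussianPDFReal_le (v : NNReal) (x : ℝ) :
    gaussianPDFReal 0 v x ≤ (√(2 * π * v))⁻¹ := by
  rw [gaussianPDFReal]
  have h1 : rexp (-(x - 0)^2 / (2 * v)) ≤ 1 := by
    rw [Real.exp_le_one_iff]
    have hv : (0:ℝ) ≤ 2 * v := by positivity
    exact div_nonpos_of_nonpos_of_nonneg (neg_nonpos.mpr (sq_nonneg _)) hv
  calc (√(2 * π * v))⁻¹ * rexp (-(x - 0)^2 / (2 * v)) ≤ (√(2 * π * v))⁻¹ * 1 := by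
        apply mul_le_mul_of_nonneg_left h1 (by positivity)
    _ = _ := mul_one _

lemma gaussian_conv (v₁ v₂ : NNReal) :
    ((gaussianReal 0 v₁).prod (gaussianReal 0 v₂)).map (fun p : ℝ × ℝ => p.1 + p.2)
      = gaussianReal 0 (v₁ + v₂) := by
  by_cases h₁ : v₁ = 0
  · rw [h₁, gaussianReal_zero_var, Measure.dirac_prod, Measure.map_map measurable_add
      measurable_prodMk_left, zero_add]
    simp only [Function.comp_def, zero_add]
    exact Measure.map_id
  by_cases h₂ : v₂ = 0
  · rw [h₂, gaussianReal_zero_var, Measure.prod_dirac, Measure.map_map measurable_add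
      measurable_prodMk_right, add_zero]
    simp only [Function.comp_def, add_zero]
    exact Measure.map_id
  have hv : v₁ + v₂ ≠ 0 := by simp [h₁]
  have hadd : Measurable fun p : ℝ × ℝ => p.1 + p.2 := measurable_add
  have hker : Measurable fun p : ℝ × ℝ => gaussianPDF 0 v₂ (p.2 - p.1) :=
    (measurable_gaussianPDF _ _).comp (measurable_snd.sub measurable_fst)
  ext s hs
  rw [Measure.map_apply hadd hs, Measure.prod_apply (hadd hs)]
  have key : ∀ x : ℝ, gaussianReal 0 v₂ (Prod.mk x ⁻¹' ((fun p : ℝ × ℝ => p.1 + p.2) ⁻¹' s))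
      = ∫⁻ y in s, gaussianPDF 0 v₂ (y - x) := by
    intro x
    have hpre : Prod.mk x ⁻¹' ((fun p : ℝ × ℝ => p.1 + p.2) ⁻¹' s) = (fun y => y + x) ⁻¹' s := by
      ext y; simp [add_comm]
    rw [hpre, gaussianReal_apply _ h₂ _]
    calc ∫⁻ y in (fun y => y + x) ⁻¹' s, gaussianPDF 0 v₂ y
        = ∫⁻ y in (fun y => y + x) ⁻¹' s, gaussianPDF 0 v₂ ((y + x) - x) := by
          simp only [add_sub_cancel_right]
      _ = ∫⁻ y in s, gaussianPDF 0 v₂ (y - x) ∂(Measure.map (fun y => y + x) volume) :=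
          (setLIntegral_map hs ((measurable_gaussianPDF _ _).comp (measurable_sub_const x))
            (measurable_add_const x)).symm
      _ = ∫⁻ y in s, gaussianPDF 0 v₂ (y - x) := by rw [map_add_right_eq_self]
  rw [lintegral_congr key]
  have hg : Measurable fun x : ℝ => ∫⁻ y in s, gaussianPDF 0 v₂ (y - x) := by
    have : (fun x : ℝ => ∫⁻ y in s, gaussianPDF 0 v₂ (y - x))
        = fun x => ∫⁻ y, ((Prod.snd ⁻¹' s).indicator
            (fun p : ℝ × ℝ => gaussianPDF 0 v₂ (p.2 - p.1))) (x, y) := by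
      funext x
      rw [← lintegral_indicator hs]
      exact lintegral_congr fun y => by by_cases hy : y ∈ s <;> simp [Set.indicator_of_mem, Set.indicator_of_notMem, hy]
    rw [this]
    exact Measurable.lintegral_prod_right (hker.indicator (measurable_snd hs))
  rw [gaussianReal_of_var_ne_zero _ h₁,
    lintegral_withDensity_eq_lintegral_mul volume (measurable_gaussianPDF _ _) hg]
  simp only [Pi.mul_apply]
  have hmul : ∀ x : ℝ, gaussianPDF 0 v₁ x * ∫⁻ y in s, gaussianPDF 0 v₂ (y - x)
      = ∫⁻ y in s, gaussianPDF 0 v₁ x * gaussianPDF 0 v₂ (y - x) := fun x =>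
    (lintegral_const_mul _ ((measurable_gaussianPDF _ _).comp (measurable_sub_const x))).symm
  rw [lintegral_congr hmul, lintegral_lintegral_swap]
  · have inner : ∀ y : ℝ, ∫⁻ x, gaussianPDF 0 v₁ x * gaussianPDF 0 v₂ (y - x)
        = gaussianPDF 0 (v₁ + v₂) y := by
      intro y
      have hnn : ∀ x : ℝ, 0 ≤ gaussianPDFReal 0 v₁ x * gaussianPDFReal 0 v₂ (y - x) := fun x =>
        mul_nonneg (gaussianPDFReal_nonneg _ _ _) (gaussianPDFReal_nonneg _ _ _)
      have hmeas : Measurable fun x => gaussianPDFReal 0 v₁ x * gaussianPDFReal 0 v₂ (y - x) :=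
        (measurable_gaussianPDFReal _ _).mul
          ((measurable_gaussianPDFReal _ _).comp (measurable_const.sub measurable_id))
      have hint : Integrable (fun x => gaussianPDFReal 0 v₁ x * gaussianPDFReal 0 v₂ (y - x)) := by
        refine Integrable.mono' ((integrable_gaussianPDFReal 0 v₁).const_mul (√(2 * π * v₂))⁻¹)
          hmeas.aestronglyMeasurable (ae_of_all _ fun x => ?_)
        rw [Real.norm_eq_abs, abs_of_nonneg (hnn x), mul_comm ((√(2 * π * (v₂:ℝ)))⁻¹) _]
        exact mul_le_mul_of_nonneg_left (gaussianPDFReal_le v₂ _) (gaussianPDFReal_nonneg _ _ _)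
      simp only [gaussianPDF]
      rw [← pdf_conv v₁ v₂ h₁ h₂ y,
        ofReal_integral_eq_lintegral_ofReal hint (ae_of_all _ hnn)]
      congr 1
      funext x
      rw [ENNReal.ofReal_mul (gaussianPDFReal_nonneg _ _ _)]
    rw [lintegral_congr inner, gaussianReal_apply _ hv]
  · exact (((measurable_gaussianPDF 0 v₁).comp measurable_fst).mul
      ((measurable_gaussianPDF 0 v₂).comp (measurable_snd.sub measurable_fst))).aemeasurable
lemma pi_gauss_sum : ∀ (n : ℕ) (w : Fin n → NNReal),
    (Measure.pi (fun i => gaussianReal 0 (w i))).map (fun x : Fin n → ℝ => ∑ i, x i)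
      = gaussianReal 0 (∑ i, w i) := by
  intro n
  induction n with
  | zero =>
    intro w
    have h0 : (fun x : Fin 0 → ℝ => ∑ i, x i) = fun _ => (0 : ℝ) := by
      funext x; simp
    rw [h0, Measure.map_const, measure_univ, one_smul]
    simp [gaussianReal_zero_var]
  | succ n ih =>
    intro w
    have hmp := measurePreserving_piFinSuccAbove (fun i : Fin (n+1) => gaussianReal 0 (w i)) 0
    set e := MeasurableEquiv.piFinSuccAbove (fun _ : Fin (n+1) => ℝ) 0 with he
    have hsum : (fun x : Fin (n+1) → ℝ => ∑ i, x i)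
        = (fun p : ℝ × (Fin n → ℝ) => p.1 + ∑ j, p.2 j) ∘ e := by
      funext x
      simp [he, MeasurableEquiv.piFinSuccAbove, Fin.sum_univ_succ, Fin.succAbove_zero, Fin.tail]
    rw [hsum, ← Measure.map_map (by fun_prop) e.measurable, hmp.map_eq]
    have hcomp : (fun p : ℝ × (Fin n → ℝ) => p.1 + ∑ j, p.2 j)
        = (fun q : ℝ × ℝ => q.1 + q.2) ∘ (Prod.map id (fun x : Fin n → ℝ => ∑ j, x j)) := rfl
    rw [hcomp, ← Measure.map_map measurable_add (measurable_id.prodMap (by fun_prop)),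
      ← Measure.map_prod_map _ _ measurable_id (by fun_prop), Measure.map_id, ih,
      gaussian_conv, Fin.sum_univ_succ]
    rfl

lemma complexGaussian_map (v : NNReal) (c d : ℝ) :
    (complexGaussian v).map (fun z : ℂ => c * z.re + d * z.im)
      = gaussianReal 0 ((⟨c^2, sq_nonneg c⟩ + ⟨d^2, sq_nonneg d⟩ : NNReal) * v) := by
  rw [complexGaussian, Measure.map_map (by fun_prop) (by fun_prop)]
  have hcomp : (fun z : ℂ => c * z.re + d * z.im) ∘ (fun p : ℝ × ℝ => (p.1 : ℂ) + p.2 * Complex.I)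
      = (fun q : ℝ × ℝ => q.1 + q.2) ∘ (Prod.map (c * ·) (d * ·)) := by
    funext p
    simp [Complex.add_re, Complex.add_im, Complex.mul_re, Complex.mul_im]
  rw [hcomp, ← Measure.map_map measurable_add (Measurable.prodMap (measurable_const_mul c)
    (measurable_const_mul d)), ← Measure.map_prod_map _ _ (measurable_const_mul c)
    (measurable_const_mul d), gaussianReal_map_const_mul, gaussianReal_map_const_mul]
  simp only [mul_zero]
  rw [gaussian_conv]; exact congrArg _ (add_mul _ _ _).symm


/-- if the synchronization word `s` has ideal autocorrelation
(`Re(s_τᴴ s_{μ₀}) = 0` for `τ ≠ μ₀`) and `‖s‖² = n ρ_s`, then for `Y ~ CN(0,(1+ρ)Iₙ)` and the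
correlation metric `f`, each pairwise error probability equals `Q(√(n ρ_s/(1+ρ)))`, and the
union bound gives `P(∃ τ ≠ μ₀, f(μ₀) ≤ f(τ)) ≤ (n−1) Q(√(n ρ_s/(1+ρ)))`. -/
theorem stmt15 (n : ℕ) (hn : 2 ≤ n) (ρ ρs : ℝ) (hρ : 0 ≤ ρ) (hρs : 0 < ρs)
    (s : Fin n → ℂ) (μ₀ : Fin n)
    (hcorr : ∀ τ : Fin n, τ ≠ μ₀ → (∑ i, (starRingEnd ℂ) (s (i - τ)) * s (i - μ₀)).re = 0)
    (hnorm : ∑ i, ‖s i‖ ^ 2 = n * ρs)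
    (μY : Measure (Fin n → ℂ))
    (hY : μY = Measure.pi (fun _ : Fin n => complexGaussian (Real.toNNReal ((1 + ρ) / 2))))
    (f : Fin n → (Fin n → ℂ) → ℝ)
    (hf : ∀ t y, f t y = (∑ i, (starRingEnd ℂ) (s (i - t)) * (s (i - μ₀) + y i)).re) :
    (∀ τ : Fin n, τ ≠ μ₀ → μY {y | f μ₀ y ≤ f τ y} =
        ProbabilityTheory.gaussianReal 0 1 (Set.Ioi (Real.sqrt (n * ρs / (1 + ρ))))) ∧
    μY {y | ∃ τ : Fin n, τ ≠ μ₀ ∧ f μ₀ y ≤ f τ y} ≤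
      ((n - 1 : ℕ) : ENNReal) *
        ProbabilityTheory.gaussianReal 0 1 (Set.Ioi (Real.sqrt (n * ρs / (1 + ρ)))) := by
  have hρ1 : (0:ℝ) < 1 + ρ := by linarith
  have hn0 : (0:ℝ) < n := by
    have : (2:ℝ) ≤ n := by exact_mod_cast hn
    linarith
  have hm0 : (0:ℝ) < n * ρs := mul_pos hn0 hρs
  set v : NNReal := Real.toNNReal ((1 + ρ) / 2) with hv_def
  have hv : (v : ℝ) = (1 + ρ) / 2 := Real.coe_toNNReal _ (by linarith)
  have key : ∀ τ : Fin n, τ ≠ μ₀ → μY {y | f μ₀ y ≤ f τ y} =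
      gaussianReal 0 1 (Set.Ioi (√(n * ρs / (1 + ρ)))) := by
    intro τ hτ
    haveI : NeZero n := ⟨by omega⟩
    set u : Fin n → ℂ := fun i => s (i - μ₀) with hu
    set w : Fin n → ℂ := fun i => s (i - τ) with hw
    set c : Fin n → ℝ := fun i => (u i).re - (w i).re with hc
    set d : Fin n → ℝ := fun i => (u i).im - (w i).im with hd
    have hre : ∀ z : ℂ, ‖z‖ ^ 2 = z.re ^ 2 + z.im ^ 2 := fun z => by
      rw [Complex.sq_norm, Complex.normSq_apply]; ring
    have husum : ∑ i, ((u i).re ^ 2 + (u i).im ^ 2) = n * ρs := by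
      calc ∑ i, ((u i).re ^ 2 + (u i).im ^ 2) = ∑ i, ‖s (i - μ₀)‖ ^ 2 :=
            Finset.sum_congr rfl fun i _ => (hre _).symm
        _ = ∑ i, ‖s i‖ ^ 2 := Fintype.sum_equiv (Equiv.subRight μ₀) _ _ (fun i => rfl)
        _ = n * ρs := hnorm
    have hwsum : ∑ i, ((w i).re ^ 2 + (w i).im ^ 2) = n * ρs := by
      calc ∑ i, ((w i).re ^ 2 + (w i).im ^ 2) = ∑ i, ‖s (i - τ)‖ ^ 2 :=
            Finset.sum_congr rfl fun i _ => (hre _).symm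
        _ = ∑ i, ‖s i‖ ^ 2 := Fintype.sum_equiv (Equiv.subRight τ) _ _ (fun i => rfl)
        _ = n * ρs := hnorm
    have hcross : ∑ i, ((w i).re * (u i).re + (w i).im * (u i).im) = 0 := by
      have h := hcorr τ hτ
      rw [Complex.re_sum] at h
      rw [← h]
      refine Finset.sum_congr rfl fun i _ => ?_
      simp [Complex.mul_re, Complex.conj_re, Complex.conj_im, hu, hw]
    have mA : ∑ i, (c i * (u i).re + d i * (u i).im) = n * ρs := by
      have hpt : ∀ i ∈ Finset.univ, c i * (u i).re + d i * (u i).im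
          = ((u i).re ^ 2 + (u i).im ^ 2) - ((w i).re * (u i).re + (w i).im * (u i).im) :=
        fun i _ => by rw [hc, hd]; ring
      rw [Finset.sum_congr rfl hpt, Finset.sum_sub_distrib, husum, hcross, sub_zero]
    have hB : ∑ i, (c i ^ 2 + d i ^ 2) = 2 * (n * ρs) := by
      have hpt : ∀ i ∈ Finset.univ, c i ^ 2 + d i ^ 2
          = (((u i).re ^ 2 + (u i).im ^ 2) + ((w i).re ^ 2 + (w i).im ^ 2))
            - 2 * ((w i).re * (u i).re + (w i).im * (u i).im) :=
        fun i _ => by rw [hc, hd]; ring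
      rw [Finset.sum_congr rfl hpt, Finset.sum_sub_distrib, Finset.sum_add_distrib,
        ← Finset.mul_sum, husum, hwsum, hcross]
      ring
    set L : (Fin n → ℂ) → ℝ := fun y => ∑ i, (c i * (y i).re + d i * (y i).im) with hL
    have hLmeas : Measurable L := by
      apply Finset.measurable_sum
      intro i _
      exact ((Complex.measurable_re.comp (measurable_pi_apply i)).const_mul (c i)).add
        ((Complex.measurable_im.comp (measurable_pi_apply i)).const_mul (d i))
    have hdiff : ∀ y, f μ₀ y - f τ y = n * ρs + L y := by
      intro y
      rw [hf, hf, ← Complex.sub_re, ← Finset.sum_sub_distrib, Complex.re_sum]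
      have hpt : ∀ i ∈ Finset.univ, ((starRingEnd ℂ) (s (i - μ₀)) * (s (i - μ₀) + y i)
            - (starRingEnd ℂ) (s (i - τ)) * (s (i - μ₀) + y i)).re
          = (c i * (u i).re + d i * (u i).im) + (c i * (y i).re + d i * (y i).im) := by
        intro i _
        simp [hc, hd, hu, hw, Complex.sub_re, Complex.mul_re, Complex.add_re, Complex.add_im,
          Complex.conj_re, Complex.conj_im]
        ring
      rw [Finset.sum_congr rfl hpt, Finset.sum_add_distrib, mA, hL]
    have hset : {y | f μ₀ y ≤ f τ y} = L ⁻¹' Set.Iic (-(n * ρs)) := by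
      ext y
      simp only [Set.mem_setOf_eq, Set.mem_preimage, Set.mem_Iic]
      have h := hdiff y
      constructor <;> intro h' <;> linarith
    set W : Fin n → NNReal :=
      fun i => (⟨(c i) ^ 2, sq_nonneg _⟩ + ⟨(d i) ^ 2, sq_nonneg _⟩ : NNReal) * v with hW
    have hmp : MeasurePreserving (fun (y : Fin n → ℂ) (i : Fin n) =>
        c i * (y i).re + d i * (y i).im) μY (Measure.pi fun i => gaussianReal 0 (W i)) := by
      rw [hY]
      exact measurePreserving_pi _ _ (fun i => ⟨by fun_prop, complexGaussian_map v (c i) (d i)⟩)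
    have hLmap : μY.map L = gaussianReal 0 (∑ i, W i) := by
      have hLrw : L = (fun x : Fin n → ℝ => ∑ i, x i)
          ∘ (fun (y : Fin n → ℂ) (i : Fin n) => c i * (y i).re + d i * (y i).im) := rfl
      rw [hLrw, ← Measure.map_map (Finset.measurable_sum _ fun i _ => measurable_pi_apply i)
        hmp.measurable, hmp.map_eq, pi_gauss_sum]
    have hWsum : ((∑ i, W i : NNReal) : ℝ) = n * ρs * (1 + ρ) := by
      rw [NNReal.coe_sum]
      simp only [hW, NNReal.coe_mul, NNReal.coe_add, NNReal.coe_mk, hv]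
      rw [← Finset.sum_mul]
      change (∑ i, (c i ^ 2 + d i ^ 2)) * ((1 + ρ) / 2) = _
      rw [hB]
      ring
    have hst : √(n * ρs * (1 + ρ)) ^ 2 = n * ρs * (1 + ρ) := Real.sq_sqrt (by positivity)
    have hVeq : (⟨√(n * ρs * (1 + ρ)) ^ 2, sq_nonneg _⟩ : NNReal) * 1 = ∑ i, W i := by
      apply NNReal.coe_injective
      show (√(n * ρs * (1 + ρ)) ^ 2 * 1 : ℝ) = ((∑ i, W i : NNReal) : ℝ)
      rw [hst, hWsum, mul_one]
    have hgV : gaussianReal 0 (∑ i, W i) = (gaussianReal 0 1).map (fun x => √(n * ρs * (1 + ρ)) * x) := by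
      rw [gaussianReal_map_const_mul, mul_zero]; exact congrArg _ hVeq.symm
    have hq : n * ρs / √(n * ρs * (1 + ρ)) = √(n * ρs / (1 + ρ)) := by
      rw [Real.sqrt_mul hm0.le, Real.sqrt_div' _ hρ1.le, div_mul_eq_div_div, Real.div_sqrt]
    have hcpos : 0 < √(n * ρs * (1 + ρ)) := Real.sqrt_pos.mpr (by positivity)
    have hpre2 : (fun x => √(n * ρs * (1 + ρ)) * x) ⁻¹' Set.Iic (-(n * ρs))
        = Set.Iic (-√(n * ρs / (1 + ρ))) := by
      ext x
      simp only [Set.mem_preimage, Set.mem_Iic]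
      rw [mul_comm, ← le_div_iff₀ hcpos, neg_div, hq]
    have hone : (⟨(-1 : ℝ) ^ 2, sq_nonneg _⟩ : NNReal) * 1 = 1 := NNReal.coe_injective (by show ((-1:ℝ) ^ 2 * 1) = 1; norm_num)
    have hneg : (gaussianReal 0 1).map (fun x : ℝ => -1 * x) = gaussianReal 0 1 := by
      rw [gaussianReal_map_const_mul, mul_zero]
      exact congrArg _ hone
    have hIic : gaussianReal 0 1 (Set.Iic (-√(n * ρs / (1 + ρ))))
        = gaussianReal 0 1 (Set.Ioi (√(n * ρs / (1 + ρ)))) := by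
      set q := √(n * ρs / (1 + ρ))
      have h1 : gaussianReal 0 1 (Set.Iic (-q))
          = gaussianReal 0 1 ((fun x : ℝ => -1 * x) ⁻¹' Set.Iic (-q)) := by
        conv_lhs => rw [← hneg]
        rw [Measure.map_apply (measurable_const_mul _) measurableSet_Iic]
      have h2 : (fun x : ℝ => -1 * x) ⁻¹' Set.Iic (-q) = Set.Ici q := by
        ext x
        simp only [Set.mem_preimage, Set.mem_Iic, Set.mem_Ici]
        constructor <;> intro <;> linarith
      have h3 : gaussianReal 0 1 {q} = 0 :=
        gaussianReal_absolutelyContinuous 0 one_ne_zero Real.volume_singleton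
      rw [h1, h2, ← Set.Ioi_union_left, measure_union (by simp) (measurableSet_singleton q), h3,
        add_zero]
    rw [hset, ← Measure.map_apply hLmeas measurableSet_Iic, hLmap, hgV,
      Measure.map_apply (measurable_const_mul _) measurableSet_Iic, hpre2, hIic]
  refine ⟨key, ?_⟩
  have hEq : {y | ∃ τ : Fin n, τ ≠ μ₀ ∧ f μ₀ y ≤ f τ y}
      = ⋃ τ ∈ Finset.univ.erase μ₀, {y : Fin n → ℂ | f μ₀ y ≤ f τ y} := by
    ext y
    simp [Finset.mem_erase]
  rw [hEq]
  refine le_trans (measure_biUnion_finset_le _ _) ?_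
  rw [Finset.sum_congr rfl (fun τ hτ => key τ (Finset.ne_of_mem_erase hτ)),
    Finset.sum_const, Finset.card_erase_of_mem (Finset.mem_univ _), Finset.card_univ,
    Fintype.card_fin, nsmul_eq_mul]
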